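/- Fix an integer d ≥ 3. Let C be an indeterminate and define φ_C(x) = x^d − Cd·x^{d−1} + C(d−1) ∈ (ℤ[C])[x], and for n ≥ 1 let P_n ∈ ℤ[C] be the evaluation at x = 0 of the n-th iterate of φ_C, i.e. P_n = φ_C^n(0). Then for every n ≥ 1: P_n has degree d^{n−1} in C; the leading coefficient of P_n is ±(d−1)^m for some integer m ≥ 1; and P_n, regarded as a polynomial in ℚ[C], is squarefree — equivalently, all roots of P_n in an algebraic closure of ℚ are simple. -/

import Mathlib

open Polynomial

noncomputable section

/-- The `n`-th iterate of a polynomial under composition: `polyIter φ 0 = X`,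
`polyIter φ (n+1) = φ ∘ (polyIter φ n)`. -/
def polyIter {R : Type*} [CommRing R] (φ : Polynomial R) : ℕ → Polynomial R
  | 0 => X
  | n + 1 => φ.comp (polyIter φ n)

/-- The splitting field `K_n` of the `n`-th iterate of `φ ∈ ℤ[x]` over `ℚ`, inside a fixed
algebraic closure of `ℚ`. -/
def Kfield (φ : Polynomial ℤ) (n : ℕ) : IntermediateField ℚ (AlgebraicClosure ℚ) :=
  IntermediateField.adjoin ℚ ((polyIter φ n).rootSet (AlgebraicClosure ℚ))

/-- The order of `Gal(K_n / K_{n-1})`: the number of automorphisms of `K_n` over `ℚ`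
fixing every element of `K_{n-1}` pointwise. -/
def relGalCard (φ : Polynomial ℤ) (n : ℕ) : ℕ :=
  Nat.card {σ : Kfield φ n ≃ₐ[ℚ] Kfield φ n //
    ∀ (x : AlgebraicClosure ℚ) (_ : x ∈ Kfield φ (n - 1)) (hx' : x ∈ Kfield φ n),
      σ ⟨x, hx'⟩ = ⟨x, hx'⟩}

end

/-- The basic recursion for `P_{n+1}` in terms of `P_n`. -/
lemma st16_rec {d : ℕ} (ψ : Polynomial (Polynomial ℤ))
    (hψ : ψ = X ^ d - C ((Polynomial.C (d : ℤ)) * X) * X ^ (d - 1)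
      + C ((Polynomial.C ((d : ℤ) - 1)) * X)) (n : ℕ) :
    (polyIter ψ (n+1)).eval 0 =
      ((polyIter ψ n).eval 0) ^ d
        - (Polynomial.C (d : ℤ) * X) * ((polyIter ψ n).eval 0) ^ (d - 1)
        + Polynomial.C ((d : ℤ) - 1) * X := by
  show (ψ.comp (polyIter ψ n)).eval 0 = _
  rw [eval_comp, hψ]
  simp

/-- `P₁ = (d-1)·C`. -/
lemma st16_P1 {d : ℕ} (hd : 3 ≤ d) (ψ : Polynomial (Polynomial ℤ))
    (hψ : ψ = X ^ d - C ((Polynomial.C (d : ℤ)) * X) * X ^ (d - 1)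
      + C ((Polynomial.C ((d : ℤ) - 1)) * X)) :
    (polyIter ψ 1).eval 0 = Polynomial.C ((d : ℤ) - 1) * X := by
  rw [st16_rec ψ hψ 0]
  show (Polynomial.X.eval 0)^d - _ * (Polynomial.X.eval 0)^(d-1) + _ = _
  rw [eval_X]
  rw [zero_pow (by omega : d ≠ 0), zero_pow (by omega : d - 1 ≠ 0)]
  ring

/-- The derivative of any value of the recursion is `≡ -1 (mod d)`. -/
lemma st16_deriv {d : ℕ} (hd : 3 ≤ d) (p : Polynomial ℤ) :
    ∃ g : Polynomial ℤ, derivative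
      (p ^ d - (Polynomial.C (d : ℤ) * X) * p ^ (d - 1) + Polynomial.C ((d : ℤ) - 1) * X)
      = Polynomial.C (d : ℤ) * g - 1 := by
  obtain ⟨e, rfl⟩ : ∃ e, d = e + 2 := ⟨d - 2, by omega⟩
  refine ⟨p ^ (e+1) * derivative p - p ^ (e+1)
      - Polynomial.C ((e : ℤ) + 1) * X * p ^ e * derivative p + 1, ?_⟩
  simp only [derivative_add, derivative_sub, derivative_mul, derivative_pow,
    derivative_X, derivative_C, derivative_one, show e + 2 - 1 = e + 1 from rfl,
    show e + 1 - 1 = e from rfl, C_eq_intCast]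
  push_cast
  ring_nf
  rw [show (2 + (e:ℤ)) = (1 + (e:ℤ)) + 1 by ring, map_add, map_one]
  ring

/-- `P₂` explicitly. -/
lemma st16_P2 {d : ℕ} (hd : 3 ≤ d) (p : Polynomial ℤ) (hp : p = Polynomial.C ((d:ℤ)-1) * X) :
    p ^ d - (Polynomial.C (d : ℤ) * X) * p ^ (d - 1) + Polynomial.C ((d : ℤ) - 1) * X
      = Polynomial.C (-((d:ℤ)-1)^(d-1)) * X ^ d + Polynomial.C ((d : ℤ) - 1) * X := by
  obtain ⟨e, rfl⟩ : ∃ e, d = e + 2 := ⟨d - 2, by omega⟩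
  subst hp
  simp only [show e + 2 - 1 = e + 1 from rfl, map_neg, map_pow, map_sub, mul_pow, C_eq_intCast]
  push_cast
  ring_nf
  simp only [map_one]
  ring_nf

/-- Degree and leading coefficient step of the recursion when `deg > 1`. -/
lemma st16_step {d : ℕ} (hd : 3 ≤ d) (p : Polynomial ℤ) {D : ℕ} (hD : 1 < D)
    (hdeg : p.natDegree = D) :
    (p ^ d - (Polynomial.C (d : ℤ) * X) * p ^ (d - 1)
        + Polynomial.C ((d : ℤ) - 1) * X).natDegree = d * D ∧
    (p ^ d - (Polynomial.C (d : ℤ) * X) * p ^ (d - 1)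
        + Polynomial.C ((d : ℤ) - 1) * X).leadingCoeff = p.leadingCoeff ^ d := by
  have hp0 : p ≠ 0 := fun h => by simp [h] at hdeg; omega
  have hdegp : p.degree = (D : ℕ) := by rw [degree_eq_natDegree hp0, hdeg]
  set q := p - Polynomial.C (d : ℤ) * X with hq
  have hsm : (Polynomial.C (d : ℤ) * X).degree < p.degree := by
    refine lt_of_le_of_lt (degree_C_mul_X_le _) ?_
    rw [hdegp]
    exact_mod_cast hD
  have hlcq : q.leadingCoeff = p.leadingCoeff := leadingCoeff_sub_of_degree_lt hsm
  have hdq : q.degree = p.degree := by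
    rw [hq, sub_eq_add_neg]
    rw [degree_add_eq_left_of_degree_lt (by rwa [degree_neg])]
  have hq0 : q ≠ 0 := fun h => by
    rw [h, degree_zero] at hdq
    rw [hdegp] at hdq
    exact (by simp : ¬ ((⊥ : WithBot ℕ) = (D:ℕ))) hdq
  have hndq : q.natDegree = D := by
    have := natDegree_eq_of_degree_eq hdq
    rw [hdeg] at this; exact this
  have hd1 : d - 1 + 1 = d := by omega
  have hM : p ^ d - (Polynomial.C (d : ℤ) * X) * p ^ (d - 1) = p ^ (d-1) * q := by
    rw [hq, mul_sub, ← pow_succ, hd1]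
    ring
  have hM0 : p ^ (d-1) * q ≠ 0 := mul_ne_zero (pow_ne_zero _ hp0) hq0
  have hndM : (p ^ (d-1) * q).natDegree = d * D := by
    rw [natDegree_mul (pow_ne_zero _ hp0) hq0, natDegree_pow, hdeg, hndq]
    calc (d-1) * D + D = ((d-1) + 1) * D := by ring
    _ = d * D := by rw [hd1]
  have hlcM : (p ^ (d-1) * q).leadingCoeff = p.leadingCoeff ^ d := by
    rw [leadingCoeff_mul, leadingCoeff_pow, hlcq, ← pow_succ, hd1]
  have hsm2 : (Polynomial.C ((d : ℤ) - 1) * X).degree < (p ^ (d-1) * q).degree := by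
    refine lt_of_le_of_lt (degree_C_mul_X_le _) ?_
    rw [degree_eq_natDegree hM0, hndM]
    have : 1 < d * D := by nlinarith
    exact_mod_cast this
  constructor
  · rw [hM]
    rw [natDegree_add_eq_left_of_natDegree_lt, hndM]
    have h1 : (Polynomial.C ((d : ℤ) - 1) * X).natDegree ≤ 1 :=
      natDegree_le_iff_degree_le.mpr (degree_C_mul_X_le _)
    rw [hndM]
    have : 1 < d * D := by nlinarith
    omega
  · rw [hM, leadingCoeff_add_of_degree_lt' hsm2, hlcM]

/-- Degree and leading coefficient of `P_n`. -/
lemma st16_deg_lc {d : ℕ} (hd : 3 ≤ d) (ψ : Polynomial (Polynomial ℤ))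
    (hψ : ψ = X ^ d - C ((Polynomial.C (d : ℤ)) * X) * X ^ (d - 1)
      + C ((Polynomial.C ((d : ℤ) - 1)) * X)) :
    ∀ n : ℕ, 1 ≤ n →
      ((polyIter ψ n).eval 0).natDegree = d ^ (n - 1) ∧
      (∃ m : ℕ, 1 ≤ m ∧
        (((polyIter ψ n).eval 0).leadingCoeff = ((d : ℤ) - 1) ^ m ∨
          ((polyIter ψ n).eval 0).leadingCoeff = -((d : ℤ) - 1) ^ m)) := by
  have hdz : (3:ℤ) ≤ (d:ℤ) := by exact_mod_cast hd
  have ha0 : ((d:ℤ) - 1) ≠ 0 := by omega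
  intro n hn
  induction n, hn using Nat.le_induction with
  | base =>
    rw [st16_P1 hd ψ hψ]
    refine ⟨by rw [natDegree_C_mul_X _ ha0]; simp, 1, le_refl 1, Or.inl ?_⟩
    rw [leadingCoeff_C_mul_X, pow_one]
  | succ n hn ih =>
    obtain ⟨ih1, m, hm, ihlc⟩ := ih
    rw [show n + 1 - 1 = n from rfl]
    rw [st16_rec ψ hψ n]
    rcases eq_or_lt_of_le hn with h1 | h2
    · -- n = 1
      subst h1
      rw [st16_P2 hd _ (st16_P1 hd ψ hψ)]
      have hc : -((d:ℤ)-1)^(d-1) ≠ 0 := neg_ne_zero.mpr (pow_ne_zero _ ha0)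
      have hnd1 : (Polynomial.C (-((d:ℤ)-1)^(d-1)) * X ^ d).natDegree = d :=
        natDegree_C_mul_X_pow d _ hc
      have hne : (Polynomial.C (-((d:ℤ)-1)^(d-1)) * X ^ d) ≠ 0 := by
        intro h
        have := hnd1
        rw [h, natDegree_zero] at this
        omega
      have hdeglt : (Polynomial.C ((d:ℤ)-1) * X).degree
          < (Polynomial.C (-((d:ℤ)-1)^(d-1)) * X ^ d).degree := by
        refine lt_of_le_of_lt (degree_C_mul_X_le _) ?_
        rw [degree_eq_natDegree hne, hnd1]
        exact_mod_cast (by omega : 1 < d)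
      constructor
      · rw [natDegree_add_eq_left_of_natDegree_lt, hnd1, pow_one]
        rw [hnd1]
        have : (Polynomial.C ((d:ℤ)-1) * X).natDegree ≤ 1 :=
          natDegree_le_iff_degree_le.mpr (degree_C_mul_X_le _)
        omega
      · refine ⟨d - 1, by omega, Or.inr ?_⟩
        rw [leadingCoeff_add_of_degree_lt' hdeglt, leadingCoeff_C_mul_X_pow]
    · -- 2 ≤ n
      have hD : 1 < d ^ (n-1) := one_lt_pow' (by omega) (by omega)
      obtain ⟨hs1, hs2⟩ := st16_step hd _ hD ih1
      constructor
      · rw [hs1, ← pow_succ']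
        congr 1
        omega
      · refine ⟨m * d, by nlinarith, ?_⟩
        rw [hs2]
        rcases ihlc with h | h
        · left; rw [h, ← pow_mul]
        · rcases Nat.even_or_odd d with he | ho
          · left; rw [h, he.neg_pow, ← pow_mul]
          · right; rw [h, ho.neg_pow, ← pow_mul]

/-- Squarefreeness over `ℚ` from the two arithmetic facts about `P_n`. -/
lemma st16_sq {d : ℕ} (hd : 3 ≤ d) (p : Polynomial ℤ) (m : ℕ)
    (hlc : p.leadingCoeff = ((d : ℤ) - 1) ^ m ∨ p.leadingCoeff = -((d : ℤ) - 1) ^ m)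
    (hder : ∃ g : Polynomial ℤ, derivative p = Polynomial.C (d : ℤ) * g - 1) :
    Squarefree (p.map (algebraMap ℤ ℚ)) := by
  classical
  have hdz : (3:ℤ) ≤ (d:ℤ) := by exact_mod_cast hd
  have ha0 : ((d:ℤ) - 1) ≠ 0 := by omega
  have hlc0 : p.leadingCoeff ≠ 0 := by
    rcases hlc with h | h <;> rw [h]
    · exact pow_ne_zero _ ha0
    · exact neg_ne_zero.mpr (pow_ne_zero _ ha0)
  have hp0 : p ≠ 0 := leadingCoeff_ne_zero.mp hlc0
  have hinjZQ : Function.Injective (algebraMap ℤ ℚ) := fun a b h => by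
    rwa [algebraMap_int_eq, eq_intCast, eq_intCast, Int.cast_inj] at h
  set Q := p.map (algebraMap ℤ ℚ) with hQdef
  have hQ0 : Q ≠ 0 := by
    rw [hQdef, Ne, Polynomial.map_eq_zero_iff hinjZQ]
    exact hp0
  suffices hsep : Q.Separable from hsep.squarefree
  rw [Polynomial.separable_def]
  by_contra hcop
  set G := EuclideanDomain.gcd Q (derivative Q) with hG
  have hGu : ¬ IsUnit G := fun h => hcop ((EuclideanDomain.gcd_isUnit_iff).mp h)
  have hG0 : G ≠ 0 := fun h => hQ0 (EuclideanDomain.gcd_eq_zero_iff.mp h).1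
  have hdegG : G.degree ≠ 0 := fun h => hGu (isUnit_iff_degree_eq_zero.mpr h)
  obtain ⟨c, hc⟩ := IsAlgClosed.exists_aeval_eq_zero (AlgebraicClosure ℚ) G hdegG
  have hcQ : aeval c Q = 0 := by
    obtain ⟨t, ht⟩ := EuclideanDomain.gcd_dvd_left Q (derivative Q)
    rw [← hG] at ht
    rw [ht, map_mul, hc, zero_mul]
  have hcQ' : aeval c (derivative Q) = 0 := by
    obtain ⟨t, ht⟩ := EuclideanDomain.gcd_dvd_right Q (derivative Q)
    rw [← hG] at ht
    rw [ht, map_mul, hc, zero_mul]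
  have hcp : aeval c p = 0 := by rwa [hQdef, aeval_map_algebraMap] at hcQ
  have hcp' : aeval c (derivative p) = 0 := by
    rwa [hQdef, derivative_map, aeval_map_algebraMap] at hcQ'
  obtain ⟨g, hg⟩ := hder
  -- the key equation  d * (aeval c g) = 1
  have hmul : ((d : ℕ) : AlgebraicClosure ℚ) * aeval c g = 1 := by
    rw [hg] at hcp'
    simp only [map_sub, map_mul, map_one, aeval_C] at hcp'
    have : (algebraMap ℤ (AlgebraicClosure ℚ)) (d : ℤ) = ((d:ℕ) : AlgebraicClosure ℚ) := by
      simp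
    rw [this] at hcp'
    exact eq_of_sub_eq_zero hcp'
  -- integrality argument
  have hinj : ∀ x : ℤ, algebraMap ℤ (AlgebraicClosure ℚ) x = 0 → x = 0 := by
    intro x hx
    rwa [eq_intCast (algebraMap ℤ (AlgebraicClosure ℚ)), Int.cast_eq_zero] at hx
  have hb : IsIntegral ℤ (algebraMap ℤ (AlgebraicClosure ℚ) p.leadingCoeff * c) :=
    ⟨p.integralNormalization, monic_integralNormalization hp0,
      integralNormalization_aeval_eq_zero hcp hinj⟩
  set L := p.leadingCoeff with hL
  set N := g.natDegree with hN
  have hT : IsIntegral ℤ (algebraMap ℤ (AlgebraicClosure ℚ) (L ^ N) * aeval c g) := by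
    rw [aeval_eq_sum_range, Finset.mul_sum]
    apply IsIntegral.sum
    intro i hi
    have hiN : i ≤ N := Nat.lt_succ_iff.mp (Finset.mem_range.mp hi)
    have hps : L ^ (N - i) * L ^ i = L ^ N := by
      rw [← pow_add]; congr 1; omega
    have hkey : algebraMap ℤ (AlgebraicClosure ℚ) (L ^ N) * (g.coeff i • c ^ i)
        = algebraMap ℤ (AlgebraicClosure ℚ) (g.coeff i * L ^ (N - i))
            * (algebraMap ℤ (AlgebraicClosure ℚ) L * c) ^ i := by
      rw [Algebra.smul_def, ← hps]
      simp only [map_mul, map_pow, mul_pow]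
      ring
    rw [hkey]
    exact isIntegral_algebraMap.mul (hb.pow i)
  have hdT : ((d:ℕ) : AlgebraicClosure ℚ) * (algebraMap ℤ (AlgebraicClosure ℚ) (L ^ N) * aeval c g)
      = algebraMap ℤ (AlgebraicClosure ℚ) (L ^ N) := by
    rw [mul_left_comm, hmul, mul_one]
  set r : ℚ := ((L ^ N : ℤ) : ℚ) / ((d:ℕ) : ℚ) with hr
  have hd0 : ((d:ℕ) : AlgebraicClosure ℚ) ≠ 0 := Nat.cast_ne_zero.mpr (by omega)
  have hdQ0 : ((d:ℕ) : ℚ) ≠ 0 := Nat.cast_ne_zero.mpr (by omega)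
  have hTr : algebraMap ℤ (AlgebraicClosure ℚ) (L ^ N) * aeval c g
      = algebraMap ℚ (AlgebraicClosure ℚ) r := by
    apply mul_left_cancel₀ hd0
    rw [hdT]
    have h1 : ((d:ℕ) : AlgebraicClosure ℚ) = algebraMap ℚ (AlgebraicClosure ℚ) ((d:ℕ):ℚ) := by
      simp
    have h2 : ((d:ℕ):ℚ) * r = ((L ^ N : ℤ) : ℚ) := by
      rw [hr]; field_simp
    rw [h1, ← map_mul, h2, IsScalarTower.algebraMap_apply ℤ ℚ (AlgebraicClosure ℚ)]
    simp
  have hrint : IsIntegral ℤ r := by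
    apply IsIntegral.tower_bot (algebraMap ℚ (AlgebraicClosure ℚ)).injective
    rw [← hTr]
    exact hT
  obtain ⟨y, hy⟩ := IsIntegrallyClosed.isIntegral_iff.mp hrint
  have hyr : ((y:ℚ)) = r := by rw [← hy]; simp [algebraMap_int_eq]
  have hyd : (d:ℤ) * y = L ^ N := by
    rw [hr] at hyr
    rw [eq_div_iff hdQ0] at hyr
    have : ((((d:ℤ)) * y : ℤ) : ℚ) = ((L ^ N : ℤ) : ℚ) := by
      push_cast at hyr ⊢; linear_combination hyr
    exact_mod_cast this
  have hL2 : L ^ 2 = ((d:ℤ) - 1) ^ (2 * m) := by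
    rcases hlc with h | h <;> rw [h] <;> ring
  have hdvd : (d:ℤ) ∣ ((d:ℤ) - 1) ^ (2 * m * N) := by
    refine dvd_trans ⟨y, hyd.symm⟩ ⟨L ^ N, ?_⟩
    calc ((d:ℤ) - 1) ^ (2*m*N) = (((d:ℤ)-1)^(2*m))^N := by rw [pow_mul]
      _ = (L^2)^N := by rw [hL2]
      _ = L^N * L^N := by rw [← pow_mul, two_mul, pow_add]
  have h0 : (d:ℤ) ≡ 0 [ZMOD (d:ℤ)] := Int.modEq_zero_iff_dvd.mpr dvd_rfl
  have h1 : ((d:ℤ) - 1) ≡ -1 [ZMOD (d:ℤ)] := by simpa using h0.sub_right 1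
  have h2 := h1.pow (2*m*N)
  have h3 : ((d:ℤ)-1)^(2*m*N) ≡ 0 [ZMOD (d:ℤ)] := Int.modEq_zero_iff_dvd.mpr hdvd
  have h4 : (-1:ℤ)^(2*m*N) ≡ 0 [ZMOD (d:ℤ)] := h2.symm.trans h3
  have h5 : (d:ℤ) ∣ (-1:ℤ)^(2*m*N) := Int.modEq_zero_iff_dvd.mp h4
  have h6 : (-1:ℤ)^(2*m*N) = 1 := Even.neg_one_pow ⟨m*N, by ring⟩
  rw [h6] at h5
  have := Int.le_of_dvd one_pos h5
  omega

/-- Fix `d ≥ 3` and let `φ_C(x) = x^d - Cd·x^{d-1} + C(d-1)` over `ℤ[C]`,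
with `P_n = φ_C^n(0) ∈ ℤ[C]`. Then for every `n ≥ 1`: `P_n` has degree `d^{n-1}` in `C`, its
leading coefficient is `±(d-1)^m` for some `m ≥ 1`, and `P_n` is squarefree over `ℚ`
(equivalently, all its roots in an algebraic closure of `ℚ` are simple). -/
theorem stmt_16 (d : ℕ) (hd : 3 ≤ d)
    (ψ : Polynomial (Polynomial ℤ))
    (hψ : ψ = X ^ d - C ((Polynomial.C (d : ℤ)) * X) * X ^ (d - 1)
      + C ((Polynomial.C ((d : ℤ) - 1)) * X)) :
    ∀ n : ℕ, 1 ≤ n →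
      ((polyIter ψ n).eval 0).natDegree = d ^ (n - 1) ∧
      (∃ m : ℕ, 1 ≤ m ∧
        (((polyIter ψ n).eval 0).leadingCoeff = ((d : ℤ) - 1) ^ m ∨
          ((polyIter ψ n).eval 0).leadingCoeff = -((d : ℤ) - 1) ^ m)) ∧
      Squarefree (((polyIter ψ n).eval 0).map (algebraMap ℤ ℚ)) := by
  intro n hn
  obtain ⟨hdeg, hlcm⟩ := st16_deg_lc hd ψ hψ n hn
  refine ⟨hdeg, hlcm, ?_⟩
  obtain ⟨m, hm, hlc⟩ := hlcm
  obtain ⟨k, rfl⟩ : ∃ k, n = k + 1 := ⟨n - 1, by omega⟩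
  have hder : ∃ g : Polynomial ℤ,
      derivative ((polyIter ψ (k+1)).eval 0) = Polynomial.C (d:ℤ) * g - 1 := by
    rw [st16_rec ψ hψ k]
    exact st16_deriv hd _
  exact st16_sq hd _ m hlc hder
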